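/- Let d ≥ 2 and for each i in {1,...,d} define p_i ∈ R^d with i-th coordinate 0 and all other coordinates 1/sqrt(2), and p'_i ∈ R^d with i-th coordinate 1 and all other coordinates 1/sqrt(2). Then the diameter of the set {p_1,p'_1,...,p_d,p'_d} equals 1, and the centroid z of {p_1,...,p_d} satisfies ||z|| = ((d-1)/d)·sqrt(d/2). -/

import Mathlib

/-- With `p i` having `i`-th coordinate `0` and all others `1/√2`, and
`p' i` having `i`-th coordinate `1` and all others `1/√2`, the diameter of
`{p 1, p' 1, …, p d, p' d}` is `1`, and the centroid `z` of `{p 1, …, p d}` has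
norm `((d-1)/d) · √(d/2)`. -/
theorem stmt_2 (d : ℕ) (hd : 2 ≤ d)
    (p p' : Fin d → EuclideanSpace ℝ (Fin d))
    (hp : ∀ i j, p i j = if j = i then 0 else 1 / Real.sqrt 2)
    (hp' : ∀ i j, p' i j = if j = i then 1 else 1 / Real.sqrt 2)
    (z : EuclideanSpace ℝ (Fin d))
    (hz : z = (1 / (d : ℝ)) • ∑ i, p i) :
    Metric.diam (Set.range p ∪ Set.range p') = 1 ∧
    ‖z‖ = ((d - 1 : ℝ) / d) * Real.sqrt (d / 2) := by
  have hs2 : Real.sqrt 2 * Real.sqrt 2 = 2 := Real.mul_self_sqrt (by norm_num)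
  have hs2pos : (0:ℝ) < Real.sqrt 2 := Real.sqrt_pos.mpr (by norm_num)
  have hs2ge1 : (1:ℝ) ≤ Real.sqrt 2 := by nlinarith
  set c : ℝ := 1 / Real.sqrt 2 with hc
  have hcsq : c ^ 2 = 1 / 2 := by
    rw [hc, div_pow, one_pow, sq, hs2]
  have hc1sq : (c - 1) ^ 2 = 3 / 2 - Real.sqrt 2 := by
    have h2c : 2 * c = Real.sqrt 2 := by
      rw [hc]; field_simp; rw [Real.sq_sqrt (by norm_num)]
    nlinarith [hcsq]
  -- squared distance computations
  have key : ∀ a b : Fin d, ∀ u v : ℝ, (u = 0 ∨ u = 1) → (v = 0 ∨ v = 1) →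
      (∑ k, ((if k = a then u else c) - (if k = b then v else c)) ^ 2) ≤ 1 := by
    intro a b u v hu hv
    by_cases hab : a = b
    · subst hab
      have hsum : (∑ k, ((if k = a then u else c) - (if k = a then v else c)) ^ 2)
          = (u - v) ^ 2 := by
        rw [Finset.sum_eq_single a]
        · simp
        · intro k _ hk; simp [hk]
        · simp
      rw [hsum]
      rcases hu with hu | hu <;> rcases hv with hv | hv <;> subst hu <;> subst hv <;> norm_num
    · have hsum : (∑ k, ((if k = a then u else c) - (if k = b then v else c)) ^ 2)
          = (u - c) ^ 2 + (c - v) ^ 2 := by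
        have hrw : ∀ k : Fin d, ((if k = a then u else c) - (if k = b then v else c)) ^ 2
            = (if k = a then (u - c) ^ 2 else 0) + (if k = b then (c - v) ^ 2 else 0) := by
          intro k
          by_cases h1 : k = a
          · subst h1
            simp [hab]
          · by_cases h2 : k = b
            · subst h2
              simp [h1]
            · simp [h1, h2]
        rw [Finset.sum_congr rfl (fun k _ => hrw k), Finset.sum_add_distrib]
        simp [Finset.sum_ite_eq']
      rw [hsum]
      rcases hu with hu | hu <;> rcases hv with hv | hv <;> subst hu <;> subst hv <;>
        nlinarith [hcsq, hc1sq]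
  have hdist_le : ∀ x ∈ Set.range p ∪ Set.range p', ∀ y ∈ Set.range p ∪ Set.range p',
      dist x y ≤ 1 := by
    intro x hx y hy
    have hxy : ∃ a b : Fin d, ∃ u v : ℝ, (u = 0 ∨ u = 1) ∧ (v = 0 ∨ v = 1) ∧
        (∀ k, x k = if k = a then u else c) ∧ (∀ k, y k = if k = b then v else c) := by
      rcases hx with ⟨a, rfl⟩ | ⟨a, rfl⟩ <;> rcases hy with ⟨b, rfl⟩ | ⟨b, rfl⟩
      · exact ⟨a, b, 0, 0, Or.inl rfl, Or.inl rfl, hp a, hp b⟩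
      · exact ⟨a, b, 0, 1, Or.inl rfl, Or.inr rfl, hp a, hp' b⟩
      · exact ⟨a, b, 1, 0, Or.inr rfl, Or.inl rfl, hp' a, hp b⟩
      · exact ⟨a, b, 1, 1, Or.inr rfl, Or.inr rfl, hp' a, hp' b⟩
    obtain ⟨a, b, u, v, hu, hv, hxk, hyk⟩ := hxy
    rw [EuclideanSpace.dist_eq]
    have : (∑ k, dist (x k) (y k) ^ 2) ≤ 1 := by
      have heq : (∑ k, dist (x k) (y k) ^ 2)
          = ∑ k, ((if k = a then u else c) - (if k = b then v else c)) ^ 2 := by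
        refine Finset.sum_congr rfl fun k _ => ?_
        rw [Real.dist_eq, sq_abs, hxk k, hyk k]
      rw [heq]
      exact key a b u v hu hv
    calc Real.sqrt (∑ k, dist (x k) (y k) ^ 2) ≤ Real.sqrt 1 := Real.sqrt_le_sqrt this
      _ = 1 := Real.sqrt_one
  have hbdd : Bornology.IsBounded (Set.range p ∪ Set.range p') :=
    ((Set.finite_range p).union (Set.finite_range p')).isBounded
  have i0 : Fin d := ⟨0, by omega⟩
  have hdist1 : dist (p i0) (p' i0) = 1 := by
    rw [EuclideanSpace.dist_eq]
    have hsum : (∑ k, dist (p i0 k) (p' i0 k) ^ 2) = 1 := by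
      rw [Finset.sum_eq_single i0]
      · rw [hp, hp']; simp [Real.dist_eq]
      · intro k _ hk
        rw [hp, hp']; simp [hk]
      · simp
    rw [hsum, Real.sqrt_one]
  have hdiam : Metric.diam (Set.range p ∪ Set.range p') = 1 := by
    refine le_antisymm (Metric.diam_le_of_forall_dist_le (by norm_num) hdist_le) ?_
    rw [← hdist1]
    exact Metric.dist_le_diam_of_mem hbdd
      (Set.mem_union_left _ (Set.mem_range_self i0))
      (Set.mem_union_right _ (Set.mem_range_self i0))
  refine ⟨hdiam, ?_⟩
  -- norm of z
  have hdpos : (0:ℝ) < d := by positivity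
  have hd1 : (0:ℝ) ≤ (d : ℝ) - 1 := by
    have : (2:ℝ) ≤ d := by exact_mod_cast hd
    linarith
  have hzk : ∀ k, z k = ((d : ℝ) - 1) / d * c := by
    intro k
    have h1 : z k = (1 / (d : ℝ)) * (∑ i, p i) k := by
      rw [hz]; rfl
    have h2 : (∑ i, p i) k = ∑ i, p i k := by
      rw [WithLp.ofLp_sum]; exact Finset.sum_apply k Finset.univ (fun i => (p i).ofLp)
    have h3 : (∑ i, p i k) = ((d : ℝ) - 1) * c := by
      have : ∀ i, p i k = c - (if k = i then c else 0) := by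
        intro i
        rw [hp]
        by_cases h : k = i <;> simp [h]
      rw [Finset.sum_congr rfl fun i _ => this i, Finset.sum_sub_distrib]
      simp [Finset.sum_ite_eq, Finset.card_univ]
      ring
    rw [h1, h2, h3]
    field_simp
  rw [EuclideanSpace.norm_eq]
  have hsum : (∑ k, ‖z k‖ ^ 2) = (((d : ℝ) - 1) / d) ^ 2 * ((d : ℝ) / 2) := by
    have : ∀ k : Fin d, ‖z k‖ ^ 2 = (((d : ℝ) - 1) / d * c) ^ 2 := by
      intro k; rw [hzk k, Real.norm_eq_abs, sq_abs]  -- ‖·‖ on ℝ is abs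
    rw [Finset.sum_congr rfl fun k _ => this k, Finset.sum_const, Finset.card_univ]
    simp only [Fintype.card_fin, nsmul_eq_mul]
    rw [mul_pow, hcsq]
    ring
  rw [hsum]
  have hrhs : (((d : ℝ) - 1) / d * Real.sqrt ((d : ℝ) / 2)) ^ 2
      = (((d : ℝ) - 1) / d) ^ 2 * ((d : ℝ) / 2) := by
    rw [mul_pow, Real.sq_sqrt (by positivity)]
  rw [← hrhs, Real.sqrt_sq (by positivity)]
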